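/- Let 0 < τ < 1 and d ≥ 2, and consider the difference equation ∑_{j=0}^d b_j(n) y(n−j) = 0 with b_j(n) = a_j + O(τⁿ), where a_0 = a_d = 0, a_1 = −1. Then there exist coefficient functions b_j(n) of this form (e.g. b_0(n) = b_2(n) = 2^{−2n−1}, b_1(n) = −(1 + 2^{−4n}) with d = 2) admitting a solution y(n) = 2^{(n+1)²} for which limsup_{n→∞} (log|y(n)|)/n = +∞. -/

import Mathlib

open Filter

/-- If the extreme limit coefficients vanish, a Poincaré–Perron type recurrence with
exponentially converging coefficients may admit a solution growing like `2^{(n+1)²}`,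
so that `(log |y(n)|)/n → ∞`. -/
theorem degenerate_recurrence_fast_solution :
    ∃ (d : ℕ) (τ : ℝ) (a : ℕ → ℝ) (b : ℕ → ℕ → ℝ) (C : ℝ) (y : ℕ → ℝ),
      2 ≤ d ∧ 0 < τ ∧ τ < 1 ∧
      a 0 = 0 ∧ a d = 0 ∧ a 1 = -1 ∧
      (∀ j ≤ d, ∀ n : ℕ, |b j n - a j| ≤ C * τ ^ n) ∧
      (∀ n : ℕ, y n = 2 ^ ((n + 1) ^ 2)) ∧
      (∀ n : ℕ, d ≤ n → ∑ j ∈ Finset.range (d + 1), b j n * y (n - j) = 0) ∧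
      Tendsto (fun n : ℕ => Real.log (y n) / (n : ℝ)) atTop atTop := by
  refine ⟨2, 1/2, fun j => if j = 1 then -1 else 0,
    fun j n => if j = 1 then -(1 + ((1:ℝ)/2)^(4*n)) else
      if j = 0 ∨ j = 2 then ((1:ℝ)/2)^(2*n+1) else 0,
    1, fun n => 2 ^ ((n + 1) ^ 2), le_refl 2, by norm_num, by norm_num,
    by norm_num, by norm_num, by norm_num, ?_, fun n => rfl, ?_, ?_⟩
  · intro j hj n
    have key : ∀ k : ℕ, n ≤ k → ((2:ℝ) ^ k)⁻¹ ≤ (2 ^ n)⁻¹ := fun k h =>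
      inv_anti₀ (by positivity) (pow_le_pow_right₀ one_le_two h)
    interval_cases j <;> simp <;> exact key _ (by omega)
  · intro n hn
    obtain ⟨m, rfl⟩ : ∃ m, n = m + 2 := ⟨n - 2, by omega⟩
    simp only [Finset.sum_range_succ, Finset.sum_range_zero]
    norm_num
    have e1 : (2:ℝ) ^ ((m + 2 + 1) ^ 2) = 2 ^ ((m+1)^2) * 2^(2*m+3) * 2^(2*m+5) := by
      rw [← pow_add, ← pow_add]; congr 1; ring
    have e2 : (2:ℝ) ^ ((m + 1 + 1) ^ 2) = 2 ^ ((m+1)^2) * 2^(2*m+3) := by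
      rw [← pow_add]; congr 1; ring
    have e4 : ((1:ℝ)/2) ^ (2*(m+2)+1) = (2^(2*m+5) : ℝ)⁻¹ := by
      rw [div_pow, one_pow, one_div]; congr 2
    have e5 : ((1:ℝ)/2) ^ (4*(m+2)) = ((2^(2*m+3) : ℝ) * 2^(2*m+5))⁻¹ := by
      rw [div_pow, one_pow, one_div, ← pow_add]; congr 2; ring
    rw [e1, e2, e4, e5]
    have h3 : (2:ℝ)^(2*m+3) ≠ 0 := by positivity
    have h5 : (2:ℝ)^(2*m+5) ≠ 0 := by positivity
    field_simp
    ring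
  · have hlog : Real.log 2 > 0 := Real.log_pos (by norm_num)
    have : Tendsto (fun n : ℕ => (n : ℝ) * Real.log 2) atTop atTop :=
      Tendsto.atTop_mul_const hlog tendsto_natCast_atTop_atTop
    apply tendsto_atTop_mono' atTop _ this
    filter_upwards [eventually_ge_atTop 1] with n hn
    have hn' : (1:ℝ) ≤ n := by exact_mod_cast hn
    rw [Real.log_pow, le_div_iff₀ (by linarith)]
    have : (n:ℝ) * (n:ℝ) ≤ ((n+1)^2 : ℕ) := by push_cast; nlinarith
    nlinarith
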